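/- Let C be a triangulated category equipped with a bounded weight structure w and with a bounded t-structure t satisfying the transversality properties (a)–(d). Then C is pseudo-abelian: every idempotent endomorphism of every object of C splits. (Corollary following Corollary 1.Ca) -/

import Mathlib

open CategoryTheory Limits Pretriangulated ZeroObject

namespace Absolute

universe v u

/-- The radical of a preadditive category: `α : M ⟶ N` belongs to the radical if and only if
for every `β : N ⟶ M`, the endomorphism `𝟙 M - β ∘ α` of `M` is an isomorphism. -/
def radical {C : Type u} [Category.{v} C] [Preadditive C] (M N : C) : Set (M ⟶ N) :=
  {α | ∀ β : N ⟶ M, IsIso (𝟙 M - α ≫ β)}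

/-- Full subcategories of preadditive categories are preadditive. -/
instance fullSubcategoryPreadditive {C : Type u} [Category.{v} C] [Preadditive C]
    (Z : C → Prop) : Preadditive (ObjectProperty.FullSubcategory Z) where
  homGroup X Y := InducedCategory.homEquiv.addCommGroup
  add_comp _ _ _ f f' g := by ext; exact Preadditive.add_comp _ _ _ f.hom f'.hom g.hom
  comp_add _ _ _ f g g' := by ext; exact Preadditive.comp_add _ _ _ f.hom g.hom g'.hom

/-- The property that morphisms `f : A ⟶ M` and `g : M ⟶ B` between objects satisfying `Z`
form a short exact sequence `0 ⟶ A ⟶ M ⟶ B ⟶ 0` in the full subcategory of objects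
satisfying `Z`. -/
def IsShortExactInSub {C : Type u} [Category.{v} C] [Preadditive C] (Z : C → Prop)
    {A M B : C} (hA : Z A) (hM : Z M) (hB : Z B) (f : A ⟶ M) (g : M ⟶ B) : Prop :=
  let A' : ObjectProperty.FullSubcategory Z := ⟨A, hA⟩
  let M' : ObjectProperty.FullSubcategory Z := ⟨M, hM⟩
  let B' : ObjectProperty.FullSubcategory Z := ⟨B, hB⟩
  let f' : A' ⟶ M' := ObjectProperty.homMk f
  let g' : M' ⟶ B' := ObjectProperty.homMk g
  Mono f' ∧ Epi g' ∧ ∃ w : f' ≫ g' = 0, (ShortComplex.mk f' g' w).Exact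

variable (C : Type u) [Category.{v} C] [Preadditive C] [HasZeroObject C]
  [HasShift C ℤ] [∀ n : ℤ, (shiftFunctor C n).Additive] [Pretriangulated C]

/-- A bounded weight structure `w` on a triangulated category `C`, given by the classes
`wle n = C_{w ≤ n}` and `wge n = C_{w ≥ n}`. -/
structure BoundedWeightStructure where
  wle : ℤ → Set C
  wge : ℤ → Set C
  wle_iso : ∀ (n : ℤ) ⦃X Y : C⦄, (X ≅ Y) → X ∈ wle n → Y ∈ wle n
  wge_iso : ∀ (n : ℤ) ⦃X Y : C⦄, (X ≅ Y) → X ∈ wge n → Y ∈ wge n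
  wle_summand : ∀ (n : ℤ) ⦃X Y : C⦄ (i : X ⟶ Y) (r : Y ⟶ X),
    i ≫ r = 𝟙 X → Y ∈ wle n → X ∈ wle n
  wge_summand : ∀ (n : ℤ) ⦃X Y : C⦄ (i : X ⟶ Y) (r : Y ⟶ X),
    i ≫ r = 𝟙 X → Y ∈ wge n → X ∈ wge n
  wle_zero : (0 : C) ∈ wle 0
  wge_zero : (0 : C) ∈ wge 0
  /-- `C_{w ≤ n} := C_{w ≤ 0}[n]` -/
  wle_shift : ∀ (n k : ℤ) (X : C), X ∈ wle n ↔ X⟦k⟧ ∈ wle (n + k)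
  wge_shift : ∀ (n k : ℤ) (X : C), X ∈ wge n ↔ X⟦k⟧ ∈ wge (n + k)
  wle_mono : ∀ n : ℤ, wle n ⊆ wle (n + 1)
  wge_anti : ∀ n : ℤ, wge (n + 1) ⊆ wge n
  w_orth : ∀ ⦃X Y : C⦄, X ∈ wle 0 → Y ∈ wge 1 → ∀ f : X ⟶ Y, f = 0
  w_dec : ∀ M : C, ∃ (A B : C) (f : A ⟶ M) (g : M ⟶ B) (h : B ⟶ A⟦(1 : ℤ)⟧),
    Triangle.mk f g h ∈ (distTriang C) ∧ A ∈ wle 0 ∧ B ∈ wge 1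
  w_bounded : ∀ M : C, ∃ m n : ℤ, M ∈ wge m ∧ M ∈ wle n

/-- The heart `C_{w = n}` of a (bounded) weight structure. -/
def BoundedWeightStructure.wEq (w : BoundedWeightStructure C) (n : ℤ) : Set C :=
  w.wle n ∩ w.wge n

/-- A bounded t-structure `t` on a triangulated category `C`, given by the classes
`tle n = C^{t ≤ n}` and `tge n = C^{t ≥ n}`, together with its truncation functors and
the associated cohomology functors `H m` with values in the heart `C^{t = 0}`. -/
structure BoundedTStructure where
  tle : ℤ → Set C
  tge : ℤ → Set C
  tle_iso : ∀ (n : ℤ) ⦃X Y : C⦄, (X ≅ Y) → X ∈ tle n → Y ∈ tle n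
  tge_iso : ∀ (n : ℤ) ⦃X Y : C⦄, (X ≅ Y) → X ∈ tge n → Y ∈ tge n
  /-- `C^{t ≤ n} := C^{t ≤ 0}[-n]`, i.e. the cohomological indexing convention -/
  tle_shift : ∀ (n k : ℤ) (X : C), X ∈ tle n ↔ X⟦k⟧ ∈ tle (n - k)
  tge_shift : ∀ (n k : ℤ) (X : C), X ∈ tge n ↔ X⟦k⟧ ∈ tge (n - k)
  tle_mono : ∀ n : ℤ, tle n ⊆ tle (n + 1)
  tge_anti : ∀ n : ℤ, tge (n + 1) ⊆ tge n
  t_orth : ∀ ⦃X Y : C⦄, X ∈ tle 0 → Y ∈ tge 1 → ∀ f : X ⟶ Y, f = 0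
  t_bounded : ∀ M : C, ∃ m n : ℤ, M ∈ tge m ∧ M ∈ tle n
  /-- truncation functor `τ^{t ≤ m}` -/
  τle : ℤ → C ⥤ C
  /-- truncation functor `τ^{t ≥ m}` -/
  τge : ℤ → C ⥤ C
  τle_mem : ∀ (m : ℤ) (X : C), (τle m).obj X ∈ tle m
  τge_mem : ∀ (m : ℤ) (X : C), (τge m).obj X ∈ tge m
  τleε : ∀ m : ℤ, τle m ⟶ 𝟭 C
  τgeη : ∀ m : ℤ, 𝟭 C ⟶ τge m
  τ_triangle : ∀ (m : ℤ) (X : C), ∃ h : (τge (m + 1)).obj X ⟶ ((τle m).obj X)⟦(1 : ℤ)⟧,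
    Triangle.mk ((τleε m).app X) ((τgeη (m + 1)).app X) h ∈ distTriang C
  /-- the cohomology functors `H^m : C ⥤ C^{t = 0}`, viewed as endofunctors of `C` with
  values in the heart -/
  H : ℤ → C ⥤ C
  H_additive : ∀ m : ℤ, (H m).Additive
  H_heart : ∀ (m : ℤ) (X : C), (H m).obj X ∈ tle 0 ∧ (H m).obj X ∈ tge 0
  H_shift : ∀ m : ℤ, Nonempty (shiftFunctor C (1 : ℤ) ⋙ H m ≅ H (m + 1))
  H_heart_id : ∀ X : C, X ∈ tle 0 → X ∈ tge 0 → Nonempty ((H 0).obj X ≅ X)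
  H_vanish_le : ∀ (m n : ℤ) (X : C), X ∈ tle n → n < m → IsZero ((H m).obj X)
  H_vanish_ge : ∀ (m n : ℤ) (X : C), X ∈ tge n → m < n → IsZero ((H m).obj X)
  /-- the family of cohomology functors associated to a bounded t-structure is conservative -/
  H_conservative : ∀ ⦃X Y : C⦄ (f : X ⟶ Y), (∀ m : ℤ, IsIso ((H m).map f)) → IsIso f

/-- The intersection `C^{t = m} = C^{t ≤ m} ∩ C^{t ≥ m}`. -/
def BoundedTStructure.tEq (t : BoundedTStructure C) (m : ℤ) : Set C :=
  t.tle m ∩ t.tge m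

variable [HasFiniteBiproducts C]

/-- A bounded weight structure and a bounded t-structure on `C` satisfying the
transversality properties (a)–(d). -/
structure TransversalPackage extends BoundedWeightStructure C, BoundedTStructure C where
  /-- (a): each `C_{w = n}^{t = m}` is abelian ... -/
  wt_abelian : ∀ (n m : ℤ),
    Abelian (ObjectProperty.FullSubcategory (fun X : C => (X ∈ wle n ∧ X ∈ wge n) ∧ (X ∈ tle m ∧ X ∈ tge m)))
  /-- (a): ... and semisimple (every monomorphism splits) ... -/
  wt_semisimple : ∀ (n m : ℤ)
    ⦃X Y : ObjectProperty.FullSubcategory (fun X : C => (X ∈ wle n ∧ X ∈ wge n) ∧ (X ∈ tle m ∧ X ∈ tge m))⦄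
    (f : X ⟶ Y), Mono f → ∃ r : Y ⟶ X, f ≫ r = 𝟙 X
  /-- (a): ... and every object of `C_{w = 0}` is isomorphic to a finite direct sum of
  objects of the categories `C_{w = 0}^{t = m}`, `m ∈ ℤ` -/
  wheart_sum : ∀ X : C, X ∈ wle 0 → X ∈ wge 0 →
    ∃ (k : ℕ) (Y : Fin k → C) (m : Fin k → ℤ),
      (∀ i, (Y i ∈ wle 0 ∧ Y i ∈ wge 0) ∧ (Y i ∈ tle (m i) ∧ Y i ∈ tge (m i))) ∧
      Nonempty (X ≅ ⨁ Y)
  /-- (b): for fixed `m` and `n₁ ≠ n₂`, every morphism from an object of `C_{w = n₁}^{t = m}`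
  to an object of `C_{w = n₂}^{t = m}` is zero -/
  wt_hom_vanish : ∀ (m n₁ n₂ : ℤ), n₁ ≠ n₂ → ∀ ⦃X Y : C⦄,
    X ∈ wle n₁ → X ∈ wge n₁ → X ∈ tle m → X ∈ tge m →
    Y ∈ wle n₂ → Y ∈ wge n₂ → Y ∈ tle m → Y ∈ tge m → ∀ f : X ⟶ Y, f = 0
  /-- (c): every object of `C^{t = m}` admits weight filtrations concentrated at any `n`,
  with outer terms in `C^{t = m}`, which are short exact sequences in `C^{t = m}` -/
  t_weight_filtration : ∀ (m n : ℤ) (M : C) (hM : M ∈ tle m ∧ M ∈ tge m),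
    ∃ (A B : C) (hA : A ∈ tle m ∧ A ∈ tge m) (hB : B ∈ tle m ∧ B ∈ tge m)
      (f : A ⟶ M) (g : M ⟶ B) (δ : B ⟶ A⟦(1 : ℤ)⟧),
      Triangle.mk f g δ ∈ (distTriang C) ∧ A ∈ wle (n - 1) ∧ B ∈ wge n ∧
      IsShortExactInSub (fun X : C => X ∈ tle m ∧ X ∈ tge m) hA hM hB f g
  /-- (d): the truncation functors preserve `C_{w ≤ n}` and `C_{w ≥ n}` -/
  τle_wle : ∀ (m n : ℤ) (X : C), X ∈ wle n → (τle m).obj X ∈ wle n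
  τle_wge : ∀ (m n : ℤ) (X : C), X ∈ wge n → (τle m).obj X ∈ wge n
  τge_wle : ∀ (m n : ℤ) (X : C), X ∈ wle n → (τge m).obj X ∈ wle n
  τge_wge : ∀ (m n : ℤ) (X : C), X ∈ wge n → (τge m).obj X ∈ wge n


/-! ### Auxiliary lemmas for the proof -/

section Aux

variable {C}

/-- An idempotent `p` on `M` splits. -/
def Splits (M : C) (p : M ⟶ M) : Prop :=
  ∃ (Y : C) (i : Y ⟶ M) (q : M ⟶ Y), i ≫ q = 𝟙 Y ∧ q ≫ i = p

/-- Purely ring-theoretic part of the splitting argument: two idempotents whose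
difference squares to zero are conjugate. -/
lemma ring_split {R : Type*} [Ring R] (e f : R) (he : e * e = e) (hf : f * f = f)
    (hd : (e - f) * (e - f) = 0) :
    ∃ v w : R, v * w = 1 ∧ w * v = 1 ∧ e * v = v * f := by
  set d := e - f with hddef
  have hsum : f * d + d * f = d := by
    have h1 : f * d + d * f = (f + d) * (f + d) - f * f - d * d := by noncomm_ring
    have h2 : f + d = e := by rw [hddef]; abel
    rw [h1, h2, he, hf, hd, sub_zero, hddef]
  have hfdf : f * d * f = 0 := by
    have h3 : f * (f * d + d * f) = f * d := by rw [hsum]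
    have h4 : f * (f * d + d * f) = f * d + f * d * f := by
      rw [mul_add, ← mul_assoc, hf, mul_assoc]
    rw [h4] at h3
    exact add_eq_left.mp h3
  have hmid : (2 * f - 1) * d * (2 * f - 1) = -d := by
    have h1 : (2 * f - 1) * d * (2 * f - 1) =
        4 * (f * d * f) - 2 * (f * d + d * f) + d := by noncomm_ring
    rw [h1, hfdf, hsum]
    noncomm_ring
  have hnn : (d * (2 * f - 1)) * (d * (2 * f - 1)) = 0 := by
    have h1 : (d * (2 * f - 1)) * (d * (2 * f - 1)) =
        d * ((2 * f - 1) * d * (2 * f - 1)) := by noncomm_ring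
    have h2 : d * (-d) = -(d * d) := by noncomm_ring
    rw [h1, hmid, h2, hd, neg_zero]
  have hed : e * d = e - e * f := by
    have h1 : e * d = e * e - e * f := by rw [hddef]; noncomm_ring
    rw [h1, he]
  have hedf : e * d * f = 0 := by
    have h1 : (e - e * f) * f = e * f - e * (f * f) := by noncomm_ring
    rw [hed, h1, hf, sub_self]
  have hdf : d * f = e * f - f := by
    have h1 : d * f = e * f - f * f := by rw [hddef]; noncomm_ring
    rw [h1, hf]
  refine ⟨1 + d * (2 * f - 1), 1 - d * (2 * f - 1), ?_, ?_, ?_⟩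
  · have h1 : (1 + d * (2 * f - 1)) * (1 - d * (2 * f - 1)) =
        1 - (d * (2 * f - 1)) * (d * (2 * f - 1)) := by noncomm_ring
    rw [h1, hnn, sub_zero]
  · have h1 : (1 - d * (2 * f - 1)) * (1 + d * (2 * f - 1)) =
        1 - (d * (2 * f - 1)) * (d * (2 * f - 1)) := by noncomm_ring
    rw [h1, hnn, sub_zero]
  · have h1 : e * (1 + d * (2 * f - 1)) = e + 2 * (e * d * f) - e * d := by noncomm_ring
    have h2 : (1 + d * (2 * f - 1)) * f = f + 2 * (d * (f * f)) - d * f := by noncomm_ring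
    rw [h1, h2, hedf, hf, hed, hdf]
    noncomm_ring
  
/-- An object with zero identity splits every idempotent. -/
lemma split_of_id_zero {M : C} (hM : 𝟙 M = 0) (p : M ⟶ M) : Splits M p := by
  have hp0 : p = 0 := by rw [← Category.comp_id p, hM, Limits.comp_zero]
  refine ⟨0, 0, 0, ?_, ?_⟩
  · exact (Limits.isZero_zero C).eq_of_src _ _
  · rw [hp0, comp_zero]

/-- The key gluing lemma: given a distinguished triangle `A ⟶ M ⟶ B ⟶ A⟦1⟧` and an
idempotent endomorphism of the triangle whose components on `A` and `B` split, the
middle component splits as well. -/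
lemma glue {A M B : C} {f : A ⟶ M} {g : M ⟶ B} {δ : B ⟶ A⟦(1 : ℤ)⟧}
    (hT : Triangle.mk f g δ ∈ distTriang C)
    {e : M ⟶ M} {a : A ⟶ A} {b : B ⟶ B}
    (sq1 : f ≫ e = a ≫ f) (sq2 : e ≫ g = g ≫ b)
    (sq3 : b ≫ δ = δ ≫ a⟦(1 : ℤ)⟧') (he : e ≫ e = e)
    {A₀ : C} {rA : A₀ ⟶ A} {sA : A ⟶ A₀} (hA1 : rA ≫ sA = 𝟙 A₀) (hA2 : sA ≫ rA = a)
    {B₀ : C} {rB : B₀ ⟶ B} {sB : B ⟶ B₀} (hB1 : rB ≫ sB = 𝟙 B₀) (hB2 : sB ≫ rB = b) :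
    Splits M e := by
  have hrb : rB ≫ b = rB := by rw [← hB2, ← Category.assoc, hB1, Category.id_comp]
  have hsa : a ≫ sA = sA := by rw [← hA2, Category.assoc, hA1, Category.comp_id]
  obtain ⟨M₀, f₀, g₀, hT₀⟩ := distinguished_cocone_triangle₂ (rB ≫ δ ≫ sA⟦(1 : ℤ)⟧')
  obtain ⟨φ, hφ1, hφ2⟩ := complete_distinguished_triangle_morphism₂
    (Triangle.mk f₀ g₀ (rB ≫ δ ≫ sA⟦(1 : ℤ)⟧')) (Triangle.mk f g δ) hT₀ hT rA rB (by
      show (rB ≫ δ ≫ sA⟦(1 : ℤ)⟧') ≫ rA⟦(1 : ℤ)⟧' = rB ≫ δ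
      rw [Category.assoc, Category.assoc, ← Functor.map_comp, hA2, ← sq3, ← Category.assoc,
        hrb])
  obtain ⟨ψ, hψ1, hψ2⟩ := complete_distinguished_triangle_morphism₂
    (Triangle.mk f g δ) (Triangle.mk f₀ g₀ (rB ≫ δ ≫ sA⟦(1 : ℤ)⟧')) hT hT₀ sA sB (by
      show δ ≫ sA⟦(1 : ℤ)⟧' = sB ≫ rB ≫ δ ≫ sA⟦(1 : ℤ)⟧'
      rw [← Category.assoc, hB2, ← Category.assoc, sq3, Category.assoc, ← Functor.map_comp, hsa])
  change M₀ ⟶ M at φ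
  change M ⟶ M₀ at ψ
  replace hφ1 : f₀ ≫ φ = rA ≫ f := hφ1
  replace hφ2 : g₀ ≫ rB = φ ≫ g := hφ2
  replace hψ1 : f ≫ ψ = sA ≫ f₀ := hψ1
  replace hψ2 : g ≫ sB = ψ ≫ g₀ := hψ2
  have hu1 : f₀ ≫ (φ ≫ ψ) = f₀ := by
    rw [← Category.assoc, hφ1, Category.assoc, hψ1, ← Category.assoc, hA1, Category.id_comp]
  have hu2 : (φ ≫ ψ) ≫ g₀ = g₀ := by
    rw [Category.assoc, ← hψ2, ← Category.assoc, ← hφ2, Category.assoc, hB1, Category.comp_id]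
  have hiso : IsIso (φ ≫ ψ) := by
    have h := isIso₂_of_isIso₁₃
      (T := Triangle.mk f₀ g₀ (rB ≫ δ ≫ sA⟦(1 : ℤ)⟧'))
      (T' := Triangle.mk f₀ g₀ (rB ≫ δ ≫ sA⟦(1 : ℤ)⟧'))
      { hom₁ := 𝟙 _
        hom₂ := φ ≫ ψ
        hom₃ := 𝟙 _
        comm₁ := by erw [Category.id_comp]; exact hu1
        comm₂ := by erw [Category.comp_id]; exact hu2.symm
        comm₃ := by erw [CategoryTheory.Functor.map_id, Category.comp_id, Category.id_comp] }
      hT₀ hT₀ (by dsimp; infer_instance) (by dsimp; infer_instance)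
    exact h
  set u := φ ≫ ψ with hu
  have hfinv : f₀ ≫ inv u = f₀ := by rw [IsIso.comp_inv_eq]; exact hu1.symm
  have hginv : inv u ≫ g₀ = g₀ := by rw [IsIso.inv_comp_eq]; exact hu2.symm
  set e' := ψ ≫ inv u ≫ φ with he'def
  have hfe' : f ≫ e' = f ≫ e := by
    rw [he'def, ← Category.assoc, hψ1, Category.assoc, ← Category.assoc f₀ (inv u) φ, hfinv,
      hφ1, ← Category.assoc, hA2, ← sq1]
  have hge' : e' ≫ g = e ≫ g := by
    rw [he'def, Category.assoc, Category.assoc, ← hφ2, ← Category.assoc (inv u) g₀ rB, hginv,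
      ← Category.assoc, ← hψ2, Category.assoc, hB2, ← sq2]
  have he'2 : e' ≫ e' = e' := by
    rw [he'def]
    calc (ψ ≫ inv u ≫ φ) ≫ ψ ≫ inv u ≫ φ
        = ψ ≫ inv u ≫ (φ ≫ ψ ≫ inv u ≫ φ) := by simp only [Category.assoc]
      _ = ψ ≫ inv u ≫ φ := by
          rw [← Category.assoc φ ψ (inv u ≫ φ), ← hu, IsIso.hom_inv_id_assoc]
  have hfd : f ≫ (e - e') = 0 := by rw [Preadditive.comp_sub, hfe', sub_self]
  have hdg : (e - e') ≫ g = 0 := by rw [Preadditive.sub_comp, hge', sub_self]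
  obtain ⟨β, hβ⟩ := Triangle.yoneda_exact₂ (Triangle.mk f g δ) hT (e - e') hfd
  change B ⟶ M at β
  replace hβ : e - e' = g ≫ β := hβ
  have hc0 : g ≫ (β ≫ g) = 0 := by rw [← Category.assoc, ← hβ]; exact hdg
  obtain ⟨α, hα⟩ := Triangle.yoneda_exact₃ (Triangle.mk f g δ) hT (β ≫ g) hc0
  change A⟦(1 : ℤ)⟧ ⟶ B at α
  replace hα : β ≫ g = δ ≫ α := hα
  have hgδ : g ≫ δ = 0 := comp_distTriang_mor_zero₂₃ _ hT
  have hdd : (e - e') ≫ (e - e') = 0 := by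
    rw [hβ]
    calc (g ≫ β) ≫ (g ≫ β) = g ≫ ((β ≫ g) ≫ β) := by simp only [Category.assoc]
      _ = g ≫ ((δ ≫ α) ≫ β) := by rw [hα]
      _ = (g ≫ δ) ≫ (α ≫ β) := by simp only [Category.assoc]
      _ = 0 := by rw [hgδ, Limits.zero_comp]
  obtain ⟨v, w, hvw, hwv, hev⟩ := ring_split (R := End M) e e'
    (by rw [End.mul_def]; exact he) (by rw [End.mul_def]; exact he'2)
    (by rw [End.mul_def]; exact hdd)
  rw [End.mul_def, End.one_def] at hvw hwv
  rw [End.mul_def, End.mul_def] at hev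
  -- `hvw : w ≫ v = 𝟙 M`, `hwv : v ≫ w = 𝟙 M`, `hev : v ≫ e = e' ≫ v`
  refine ⟨M₀, inv u ≫ φ ≫ v, w ≫ ψ, ?_, ?_⟩
  · rw [Category.assoc, Category.assoc, ← Category.assoc v w ψ, hwv, Category.id_comp,
      ← hu, IsIso.inv_hom_id]
  · calc (w ≫ ψ) ≫ inv u ≫ φ ≫ v = w ≫ (ψ ≫ inv u ≫ φ) ≫ v := by
          simp only [Category.assoc]
      _ = w ≫ e' ≫ v := by rw [← he'def]
      _ = w ≫ v ≫ e := by rw [← hev]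
      _ = e := by rw [← Category.assoc, hvw, Category.id_comp]

end Aux

namespace BoundedWeightStructure

variable {C}
variable (w : BoundedWeightStructure C)

lemma wge_anti' {a b : ℤ} (h : a ≤ b) : w.wge b ⊆ w.wge a := by
  have key : ∀ n : ℕ, w.wge (a + n) ⊆ w.wge a := by
    intro n
    induction n with
    | zero => simpa using subset_rfl
    | succ n ih =>
      intro X hX
      push_cast at hX
      refine ih (w.wge_anti (a + n) ?_)
      rwa [show a + ((n : ℤ) + 1) = a + (n : ℤ) + 1 from by ring] at hX
  intro X hX
  refine key (b - a).toNat ?_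
  rwa [show a + (((b - a).toNat : ℤ)) = b from by omega]

lemma wle_mono' {a b : ℤ} (h : a ≤ b) : w.wle a ⊆ w.wle b := by
  have key : ∀ n : ℕ, w.wle (b - n) ⊆ w.wle b := by
    intro n
    induction n with
    | zero => simpa using subset_rfl
    | succ n ih =>
      intro X hX
      push_cast at hX
      refine ih ?_
      have := w.wle_mono (b - (n + 1)) hX
      rwa [show b - ((n : ℤ) + 1) + 1 = b - (n : ℤ) from by ring] at this
  intro X hX
  refine key (b - a).toNat ?_
  rwa [show b - (((b - a).toNat : ℤ)) = a from by omega]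

lemma orth' {a b : ℤ} (hab : a < b) {X Y : C} (hX : X ∈ w.wle a) (hY : Y ∈ w.wge b)
    (f : X ⟶ Y) : f = 0 := by
  have hX' : X⟦(-a : ℤ)⟧ ∈ w.wle 0 := by
    have := (w.wle_shift a (-a) X).1 hX
    rwa [show a + -a = 0 from by ring] at this
  have hY' : Y⟦(-a : ℤ)⟧ ∈ w.wge 1 := by
    have := (w.wge_shift b (-a) Y).1 hY
    exact w.wge_anti' (by omega) this
  have hz := w.w_orth hX' hY' ((shiftFunctor C (-a : ℤ)).map f)
  apply (shiftFunctor C (-a : ℤ)).map_injective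
  rw [hz, Functor.map_zero]

/-- Weight decomposition at an arbitrary level `n`. -/
lemma dec_at (n : ℤ) (M : C) :
    ∃ (A B : C) (f : A ⟶ M) (g : M ⟶ B) (h : B ⟶ A⟦(1 : ℤ)⟧),
      Triangle.mk f g h ∈ (distTriang C) ∧ A ∈ w.wle n ∧ B ∈ w.wge (n + 1) := by
  obtain ⟨A, B, f, g, h, hT, hA, hB⟩ := w.w_dec (M⟦(-n : ℤ)⟧)
  have hT2 := Triangle.shift_distinguished (Triangle.mk f g h) hT n
  let ε : (M⟦(-n : ℤ)⟧)⟦n⟧ ≅ M := (shiftFunctorCompIsoId C (-n : ℤ) n (by omega)).app M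
  refine ⟨A⟦n⟧, B⟦n⟧,
    (n.negOnePow • f⟦n⟧') ≫ ε.hom,
    ε.inv ≫ (n.negOnePow • g⟦n⟧'),
    n.negOnePow • h⟦n⟧' ≫ (shiftFunctorComm C 1 n).hom.app A, ?_, ?_, ?_⟩
  · refine isomorphic_distinguished _ hT2 _ ?_
    refine Triangle.isoMk _ _ (Iso.refl _) ε.symm (Iso.refl _) ?_ ?_ ?_
    · dsimp [Triangle.shiftFunctor]; simp [Triangle.mk]
      rfl
    · dsimp [Triangle.shiftFunctor]; simp [Triangle.mk]
      exact (Linear.comp_units_smul _ _ _).symm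
    · dsimp [Triangle.shiftFunctor]; simp [Triangle.mk]
      rfl
  · have := (w.wle_shift 0 n A).1 hA
    rwa [zero_add] at this
  · have := (w.wge_shift 1 n B).1 hB
    rwa [show (1 : ℤ) + n = n + 1 from by ring] at this

lemma wle_ext {n : ℤ} {T : Triangle C} (hT : T ∈ distTriang C)
    (h₁ : T.obj₁ ∈ w.wle n) (h₃ : T.obj₃ ∈ w.wle n) : T.obj₂ ∈ w.wle n := by
  obtain ⟨A, B, f, g, h, hdist, hA, hB⟩ := w.dec_at n T.obj₂
  have hg : g = 0 := by
    obtain ⟨γ, hγ⟩ := Triangle.yoneda_exact₂ T hT g (w.orth' (by omega) h₁ hB _)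
    rw [hγ, w.orth' (by omega) h₃ hB γ, Limits.comp_zero]
  obtain ⟨s, hs⟩ := Triangle.coyoneda_exact₂ (Triangle.mk f g h) hdist (𝟙 T.obj₂)
    (by show 𝟙 T.obj₂ ≫ g = 0; rw [Category.id_comp]; exact hg)
  exact w.wle_summand n s f hs.symm hA

lemma wge_ext {n : ℤ} {T : Triangle C} (hT : T ∈ distTriang C)
    (h₁ : T.obj₁ ∈ w.wge n) (h₃ : T.obj₃ ∈ w.wge n) : T.obj₂ ∈ w.wge n := by
  obtain ⟨A, B, f, g, h, hdist, hA, hB⟩ := w.dec_at (n - 1) T.obj₂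
  have hB' : B ∈ w.wge n := by
    rwa [show n - 1 + 1 = n from by ring] at hB
  have hf : f = 0 := by
    obtain ⟨ξ, hξ⟩ := Triangle.coyoneda_exact₂ T hT f (w.orth' (by omega) hA h₃ _)
    rw [hξ, w.orth' (by omega) hA h₁ ξ, Limits.zero_comp]
  obtain ⟨ρ, hρ⟩ := Triangle.yoneda_exact₂ (Triangle.mk f g h) hdist (𝟙 T.obj₂)
    (by show f ≫ 𝟙 T.obj₂ = 0; rw [Category.comp_id]; exact hf)
  exact w.wge_summand n g ρ hρ.symm hB'

end BoundedWeightStructure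

namespace BoundedTStructure

variable {C}
variable (t : BoundedTStructure C)

lemma tge_anti' {a b : ℤ} (h : a ≤ b) : t.tge b ⊆ t.tge a := by
  have key : ∀ n : ℕ, t.tge (a + n) ⊆ t.tge a := by
    intro n
    induction n with
    | zero => simpa using subset_rfl
    | succ n ih =>
      intro X hX
      push_cast at hX
      refine ih (t.tge_anti (a + n) ?_)
      rwa [show a + ((n : ℤ) + 1) = a + (n : ℤ) + 1 from by ring] at hX
  intro X hX
  refine key (b - a).toNat ?_
  rwa [show a + (((b - a).toNat : ℤ)) = b from by omega]

lemma orth' {a b : ℤ} (hab : a < b) {X Y : C} (hX : X ∈ t.tle a) (hY : Y ∈ t.tge b)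
    (f : X ⟶ Y) : f = 0 := by
  have hX' : X⟦(a : ℤ)⟧ ∈ t.tle 0 := by
    have := (t.tle_shift a a X).1 hX
    rwa [show a - a = 0 from by ring] at this
  have hY' : Y⟦(a : ℤ)⟧ ∈ t.tge 1 := by
    have := (t.tge_shift b a Y).1 hY
    exact t.tge_anti' (by omega) this
  have hz := t.t_orth hX' hY' ((shiftFunctor C (a : ℤ)).map f)
  apply (shiftFunctor C (a : ℤ)).map_injective
  rw [hz, Functor.map_zero]

lemma tle_of_g_zero {n : ℤ} {A X B : C} {f : A ⟶ X} {g : X ⟶ B} {δ : B ⟶ A⟦(1 : ℤ)⟧}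
    (hT : Triangle.mk f g δ ∈ distTriang C) (hA : A ∈ t.tle n) (hB : B ∈ t.tge (n + 1))
    (hg : g = 0) : X ∈ t.tle n := by
  obtain ⟨α, hα⟩ := Triangle.yoneda_exact₃ (Triangle.mk f g δ) hT (𝟙 B)
    (by show g ≫ 𝟙 B = 0; rw [Category.comp_id]; exact hg)
  have hα0 : α = 0 := t.orth' (show n - 1 < n + 1 from by omega) ((t.tle_shift n 1 A).1 hA) hB α
  have hB0 : IsZero B := by
    rw [IsZero.iff_id_eq_zero, hα, hα0, Limits.comp_zero]
    rfl
  have hf : IsIso f := (Triangle.isZero₃_iff_isIso₁ (Triangle.mk f g δ) hT).1 hB0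
  exact t.tle_iso n (asIso f) hA

lemma tge_of_f_zero {n : ℤ} {A X B : C} {f : A ⟶ X} {g : X ⟶ B} {δ : B ⟶ A⟦(1 : ℤ)⟧}
    (hT : Triangle.mk f g δ ∈ distTriang C) (hA : A ∈ t.tle (n - 1)) (hB : B ∈ t.tge n)
    (hf : f = 0) : X ∈ t.tge n := by
  obtain ⟨β, hβ⟩ := Triangle.coyoneda_exact₂ (Triangle.mk f g δ).invRotate
    (inv_rot_of_distTriang _ hT) (𝟙 A) (by
      show 𝟙 A ≫ f = 0
      rw [Category.id_comp]; exact hf)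
  have hβ0 : β = 0 := by
    refine t.orth' (show n - 1 < n + 1 from by omega) hA ?_ β
    have := (t.tge_shift n (-1) B).1 hB
    rwa [show n - (-1 : ℤ) = n + 1 from by ring] at this
  have hA0 : IsZero A := by
    rw [IsZero.iff_id_eq_zero, hβ, hβ0, Limits.zero_comp]
    rfl
  have hg : IsIso g := (Triangle.isZero₁_iff_isIso₂ (Triangle.mk f g δ) hT).1 hA0
  exact t.tge_iso n (asIso g).symm hB

lemma τle_tge (m n : ℤ) (hmn : n ≤ m + 2) {M : C} (hM : M ∈ t.tge n) :
    (t.τle m).obj M ∈ t.tge n := by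
  obtain ⟨δ', hT'⟩ := t.τ_triangle (n - 1) ((t.τle m).obj M)
  obtain ⟨δM, hTM⟩ := t.τ_triangle m M
  have hcomp : (t.τleε (n - 1)).app ((t.τle m).obj M) ≫ (t.τleε m).app M = 0 :=
    t.orth' (show n - 1 < n from by omega) (t.τle_mem (n - 1) _) hM _
  obtain ⟨β, hβ⟩ := Triangle.coyoneda_exact₂
    (Triangle.mk ((t.τleε m).app M) ((t.τgeη (m + 1)).app M) δM).invRotate
    (inv_rot_of_distTriang _ hTM) ((t.τleε (n - 1)).app ((t.τle m).obj M)) (by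
      show (t.τleε (n - 1)).app ((t.τle m).obj M) ≫ (t.τleε m).app M = 0
      exact hcomp)
  have hβ0 : β = 0 := by
    refine t.orth' (show n - 1 < m + 2 from by omega) (t.τle_mem (n - 1) _) ?_ β
    have := (t.tge_shift (m + 1) (-1) ((t.τge (m + 1)).obj M)).1 (t.τge_mem (m + 1) M)
    rwa [show m + 1 - (-1 : ℤ) = m + 2 from by ring] at this
  have hf0 : (t.τleε (n - 1)).app ((t.τle m).obj M) = 0 := by
    rw [hβ, hβ0, Limits.zero_comp]
    rfl
  have main : (t.τle m).obj M ∈ t.tge (n - 1 + 1) := by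
    refine t.tge_of_f_zero hT' ?_ (t.τge_mem (n - 1 + 1) _) hf0
    rw [show n - 1 + 1 - 1 = n - 1 from by ring]
    exact t.τle_mem (n - 1) _
  rwa [show n - 1 + 1 = n from by ring] at main

lemma τge_tle (m' n' : ℤ) (hm : m' ≤ n' + 1) {M : C} (hM : M ∈ t.tle n') :
    (t.τge (m' + 1)).obj M ∈ t.tle n' := by
  obtain ⟨δ', hT'⟩ := t.τ_triangle n' ((t.τge (m' + 1)).obj M)
  obtain ⟨δM, hTM⟩ := t.τ_triangle m' M
  have hcomp : (t.τgeη (m' + 1)).app M ≫ (t.τgeη (n' + 1)).app ((t.τge (m' + 1)).obj M) = 0 :=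
    t.orth' (show n' < n' + 1 from by omega) hM (t.τge_mem (n' + 1) _) _
  obtain ⟨γ, hγ⟩ := Triangle.yoneda_exact₃
    (Triangle.mk ((t.τleε m').app M) ((t.τgeη (m' + 1)).app M) δM) hTM
    ((t.τgeη (n' + 1)).app ((t.τge (m' + 1)).obj M)) hcomp
  have hγ0 : γ = 0 :=
    t.orth' (show m' - 1 < n' + 1 from by omega) ((t.tle_shift m' 1 _).1 (t.τle_mem m' M))
      (t.τge_mem (n' + 1) _) γ
  have hg0 : (t.τgeη (n' + 1)).app ((t.τge (m' + 1)).obj M) = 0 := by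
    rw [hγ, hγ0, Limits.comp_zero]
    rfl
  exact t.tle_of_g_zero hT' (t.τle_mem n' _) (t.τge_mem (n' + 1) _) hg0

end BoundedTStructure

section Main

variable {C}
variable (P : TransversalPackage C)

/-- Idempotents on objects of `C_{w=n} ∩ C^{t=m}` split, by (a). -/
lemma split_wt (n m : ℤ) {M : C}
    (h1 : M ∈ P.wle n) (h2 : M ∈ P.wge n) (h3 : M ∈ P.tle m) (h4 : M ∈ P.tge m)
    (p : M ⟶ M) (hp : p ≫ p = p) : Splits M p := by
  let Z := fun X : C => (X ∈ P.wle n ∧ X ∈ P.wge n) ∧ (X ∈ P.tle m ∧ X ∈ P.tge m)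
  haveI : Abelian (ObjectProperty.FullSubcategory Z) := P.wt_abelian n m
  let M' : ObjectProperty.FullSubcategory Z := ⟨M, ⟨h1, h2⟩, ⟨h3, h4⟩⟩
  let p' : M' ⟶ M' := ObjectProperty.homMk p
  have hp' : p' ≫ p' = p' := InducedCategory.hom_ext hp
  obtain ⟨Y, i, q, hiq, hqi⟩ := IsIdempotentComplete.idempotents_split M' p' hp'
  exact ⟨Y.obj, i.hom, q.hom, congrArg InducedCategory.Hom.hom hiq,
    congrArg InducedCategory.Hom.hom hqi⟩

/-- Idempotents on objects of `C^{t=m}` split: induction on the length of the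
weight filtration, using (c). -/
lemma heart_split_w :
    ∀ (k : ℕ) (n₀ m : ℤ) (M : C), M ∈ P.tle m → M ∈ P.tge m →
      M ∈ P.wge n₀ → M ∈ P.wle (n₀ + k) →
      ∀ p : M ⟶ M, p ≫ p = p → Splits M p := by
  intro k
  induction k with
  | zero =>
    intro n₀ m M h3 h4 h2 h1 p hp
    exact split_wt P n₀ m (by simpa using h1) h2 h3 h4 p hp
  | succ k ih =>
    intro n₀ m M htle htge hwge hwle p hp
    obtain ⟨A, B, hA, hB, f, g, δ, hTr, hAle, hBge, _⟩ :=
      P.t_weight_filtration m (n₀ + 1) M ⟨htle, htge⟩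
    have hAle' : A ∈ P.wle n₀ := by
      rwa [show n₀ + 1 - 1 = n₀ from by ring] at hAle
    have hBm1 : (Triangle.mk f g δ).invRotate.obj₁ ∈ P.wge n₀ := by
      have := (P.wge_shift (n₀ + 1) (-1) B).1 hBge
      rwa [show n₀ + 1 + (-1 : ℤ) = n₀ from by ring] at this
    have hAge : A ∈ P.wge n₀ :=
      P.toBoundedWeightStructure.wge_ext (inv_rot_of_distTriang _ hTr) hBm1 hwge
    have hMle' : M ∈ P.wle (n₀ + 1 + k) := by
      push_cast at hwle
      rwa [show n₀ + ((k : ℤ) + 1) = n₀ + 1 + (k : ℤ) from by ring] at hwle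
    have hA1 : (Triangle.mk f g δ).rotate.obj₃ ∈ P.wle (n₀ + 1 + k) := by
      have := (P.wle_shift n₀ 1 A).1 hAle'
      exact P.toBoundedWeightStructure.wle_mono' (by omega) this
    have hBle : B ∈ P.wle (n₀ + 1 + k) :=
      P.toBoundedWeightStructure.wle_ext (rot_of_distTriang _ hTr) hMle' hA1
    -- morphisms `A ⟶ B` vanish by weight orthogonality
    have hAB : ∀ q : A ⟶ B, q = 0 := fun q =>
      P.toBoundedWeightStructure.orth' (by omega) hAle' hBge q
    -- construct the component `a` on `A`
    obtain ⟨a, ha⟩ := Triangle.coyoneda_exact₂ (Triangle.mk f g δ) hTr (f ≫ p) (hAB _)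
    change A ⟶ A at a
    -- construct the component `b` on `B` by TR3
    obtain ⟨b, hb1, hb2⟩ := complete_distinguished_triangle_morphism
      (Triangle.mk f g δ) (Triangle.mk f g δ) hTr hTr a p ha
    change B ⟶ B at b
    replace ha : f ≫ p = a ≫ f := ha
    replace hb1 : g ≫ b = p ≫ g := hb1
    replace hb2 : δ ≫ a⟦(1 : ℤ)⟧' = b ≫ δ := hb2
    have hAB1 : ∀ q : A ⟶ B⟦(-1 : ℤ)⟧, q = 0 := by
      intro q
      refine P.toBoundedTStructure.orth' (show m < m + 1 from by omega) hA.1 ?_ q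
      have := (P.tge_shift m (-1) B).1 hB.2
      rwa [show m - (-1 : ℤ) = m + 1 from by ring] at this
    have hcancelA : ∀ x : A ⟶ A, x ≫ f = 0 → x = 0 := by
      intro x hx
      obtain ⟨β, hβ⟩ := Triangle.coyoneda_exact₂ (Triangle.mk f g δ).invRotate
        (inv_rot_of_distTriang _ hTr) x (by show x ≫ f = 0; exact hx)
      rw [hβ, hAB1 β]
      exact Limits.zero_comp
    have haa : a ≫ a = a := by
      have h1 : (a ≫ a) ≫ f = a ≫ f := by
        rw [Category.assoc, ← ha, ← Category.assoc, ← ha, Category.assoc, hp, ha]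
      have h2 : (a ≫ a - a) ≫ f = 0 := by
        rw [Preadditive.sub_comp, h1, sub_self]
      exact sub_eq_zero.mp (hcancelA _ h2)
    have hA1B : ∀ q : A⟦(1 : ℤ)⟧ ⟶ B, q = 0 := fun q =>
      P.toBoundedTStructure.orth' (show m - 1 < m from by omega)
        ((P.tle_shift m 1 A).1 hA.1) hB.2 q
    have hcancelB : ∀ x : B ⟶ B, g ≫ x = 0 → x = 0 := by
      intro x hx
      obtain ⟨γ, hγ⟩ := Triangle.yoneda_exact₃ (Triangle.mk f g δ) hTr x hx
      replace hγ : x = δ ≫ γ := hγ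
      rw [hγ, hA1B γ, Limits.comp_zero]
    have hbb : b ≫ b = b := by
      have h1 : g ≫ (b ≫ b) = g ≫ b := by
        rw [← Category.assoc, hb1, Category.assoc, hb1, ← Category.assoc, hp]
      have h2 : g ≫ (b ≫ b - b) = 0 := by
        rw [Preadditive.comp_sub, h1, sub_self]
      exact sub_eq_zero.mp (hcancelB _ h2)
    obtain ⟨YA, iA, qA, hiA, hqA⟩ := split_wt P n₀ m hAle' hAge hA.1 hA.2 a haa
    obtain ⟨YB, iB, qB, hiB, hqB⟩ := ih (n₀ + 1) m B hB.1 hB.2 hBge hBle b hbb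
    exact glue hTr ha hb1.symm hb2.symm hp hiA hqA hiB hqB

/-- Idempotents on objects of `C^{t=m}` split. -/
lemma heart_split (m : ℤ) {M : C} (h3 : M ∈ P.tle m) (h4 : M ∈ P.tge m)
    (p : M ⟶ M) (hp : p ≫ p = p) : Splits M p := by
  obtain ⟨m', n', hge, hle⟩ := P.w_bounded M
  by_cases h : n' < m'
  · exact split_of_id_zero (P.toBoundedWeightStructure.orth' h hle hge (𝟙 M)) p
  · push_neg at h
    refine heart_split_w P (n' - m').toNat m' m M h3 h4 hge ?_ p hp
    have hEq : m' + (((n' - m').toNat : ℤ)) = n' := by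
      rw [Int.toNat_of_nonneg (by omega : (0:ℤ) ≤ n' - m')]; ring
    rwa [hEq]

/-- Idempotents split: induction on the length of the t-filtration. -/
lemma t_split :
    ∀ (k : ℕ) (m₀ : ℤ) (M : C), M ∈ P.tge m₀ → M ∈ P.tle (m₀ + k) →
      ∀ p : M ⟶ M, p ≫ p = p → Splits M p := by
  intro k
  induction k with
  | zero =>
    intro m₀ M hge hle p hp
    exact heart_split P m₀ (by simpa using hle) hge p hp
  | succ k ih =>
    intro m₀ M hge hle p hp
    obtain ⟨δ', hT'⟩ := P.τ_triangle m₀ M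
    have sq1 : (P.τleε m₀).app M ≫ p = (P.τle m₀).map p ≫ (P.τleε m₀).app M := by
      have := (P.τleε m₀).naturality p
      simpa using this.symm
    have sq2 : p ≫ (P.τgeη (m₀ + 1)).app M =
        (P.τgeη (m₀ + 1)).app M ≫ (P.τge (m₀ + 1)).map p := by
      have := (P.τgeη (m₀ + 1)).naturality p
      simpa using this
    obtain ⟨c, hc1, hc2⟩ := complete_distinguished_triangle_morphism
      (Triangle.mk ((P.τleε m₀).app M) ((P.τgeη (m₀ + 1)).app M) δ')
      (Triangle.mk ((P.τleε m₀).app M) ((P.τgeη (m₀ + 1)).app M) δ')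
      hT' hT' ((P.τle m₀).map p) p sq1
    change (P.τge (m₀ + 1)).obj M ⟶ (P.τge (m₀ + 1)).obj M at c
    replace hc1 : (P.τgeη (m₀ + 1)).app M ≫ c = p ≫ (P.τgeη (m₀ + 1)).app M := hc1
    replace hc2 : δ' ≫ ((P.τle m₀).map p)⟦(1 : ℤ)⟧' = c ≫ δ' := hc2
    have hA1B : ∀ q : (((P.τle m₀).obj M)⟦(1 : ℤ)⟧) ⟶ (P.τge (m₀ + 1)).obj M, q = 0 :=
      fun q => P.toBoundedTStructure.orth' (show m₀ - 1 < m₀ + 1 from by omega)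
        ((P.tle_shift m₀ 1 _).1 (P.τle_mem m₀ M)) (P.τge_mem (m₀ + 1) M) q
    have hcb : c = (P.τge (m₀ + 1)).map p := by
      have h0 : (P.τgeη (m₀ + 1)).app M ≫ (c - (P.τge (m₀ + 1)).map p) = 0 := by
        rw [Preadditive.comp_sub, hc1, ← sq2, sub_self]
      obtain ⟨γ, hγ⟩ := Triangle.yoneda_exact₃
        (Triangle.mk ((P.τleε m₀).app M) ((P.τgeη (m₀ + 1)).app M) δ') hT' _ h0
      replace hγ : c - (P.τge (m₀ + 1)).map p = δ' ≫ γ := hγ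
      have := hγ.trans (by rw [hA1B γ, Limits.comp_zero])
      exact sub_eq_zero.mp this
    have sq3 : (P.τge (m₀ + 1)).map p ≫ δ' = δ' ≫ ((P.τle m₀).map p)⟦(1 : ℤ)⟧' := by
      rw [← hcb]
      exact hc2.symm
    have hAge : (P.τle m₀).obj M ∈ P.tge m₀ :=
      P.toBoundedTStructure.τle_tge m₀ m₀ (by omega) hge
    have haa : (P.τle m₀).map p ≫ (P.τle m₀).map p = (P.τle m₀).map p := by
      rw [← Functor.map_comp, hp]
    have hbb : (P.τge (m₀ + 1)).map p ≫ (P.τge (m₀ + 1)).map p = (P.τge (m₀ + 1)).map p := by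
      rw [← Functor.map_comp, hp]
    obtain ⟨YA, iA, qA, hiA, hqA⟩ :=
      heart_split P m₀ (P.τle_mem m₀ M) hAge ((P.τle m₀).map p) haa
    have hBle : (P.τge (m₀ + 1)).obj M ∈ P.tle (m₀ + 1 + k) := by
      refine P.toBoundedTStructure.τge_tle m₀ (m₀ + 1 + k) (by omega) ?_
      push_cast at hle
      rwa [show m₀ + ((k : ℤ) + 1) = m₀ + 1 + (k : ℤ) from by ring] at hle
    obtain ⟨YB, iB, qB, hiB, hqB⟩ := ih (m₀ + 1) ((P.τge (m₀ + 1)).obj M)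
      (P.τge_mem (m₀ + 1) M) (by rwa [show m₀ + 1 + (k : ℤ) = m₀ + 1 + (k : ℤ) from rfl] at hBle)
      ((P.τge (m₀ + 1)).map p) hbb
    exact glue hT' sq1 sq2 sq3 hp hiA hqA hiB hqB

end Main

/-- Corollary following Corollary 1.Ca: a triangulated category equipped with a bounded weight
structure and a bounded t-structure satisfying the transversality properties (a)–(d) is
pseudo-abelian: every idempotent endomorphism of every object splits. -/
theorem corollary_pseudoabelian (P : TransversalPackage C) :
    IsIdempotentComplete C := by
  constructor
  intro X p hp
  obtain ⟨m', n', hge, hle⟩ := P.t_bounded X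
  by_cases h : n' < m'
  · exact split_of_id_zero (P.toBoundedTStructure.orth' h hle hge (𝟙 X)) p
  · push_neg at h
    refine t_split P (n' - m').toNat m' X hge ?_ p hp
    have hEq : m' + (((n' - m').toNat : ℤ)) = n' := by
      rw [Int.toNat_of_nonneg (by omega : (0:ℤ) ≤ n' - m')]; ring
    rwa [hEq]

end Absolute
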